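/- (Slicing Lemma) Let 0 < k < d be integers, let g be a dimension function, and set f(r) = r^k g(r). Let A be a Borel subset of [0,1)^d. If the set {x₁ ∈ [0,1)^k : H^g({x₂ ∈ [0,1)^{d−k} : (x₁,x₂) ∈ A}) = ∞} has positive H^k-measure, then H^f(A) = ∞. -/

import Mathlib

open MeasureTheory Set
open scoped ENNReal

/-- Hausdorff measure with gauge f (Hausdorff f-measure). -/
noncomputable def hMeas {X : Type*} [EMetricSpace X] [MeasurableSpace X] [BorelSpace X]
    (f : ℝ → ℝ) : Measure X :=
  Measure.mkMetric (fun d : ℝ≥0∞ => ENNReal.ofReal (f d.toReal))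

/-- The diameter of a fiber slice is at most the diameter of the set. -/
lemma fiber_diam_le {α β : Type*} [PseudoEMetricSpace α] [PseudoEMetricSpace β]
    (x₁ : α) (U : Set (α × β)) :
    EMetric.diam {x₂ : β | (x₁, x₂) ∈ U} ≤ EMetric.diam U := by
  refine EMetric.diam_le fun a ha b hb => ?_
  calc edist a b ≤ edist ((x₁, a) : α × β) (x₁, b) := by
        rw [Prod.edist_eq]; exact le_max_right _ _
    _ ≤ EMetric.diam U := EMetric.edist_le_diam_of_mem ha hb

/-- The diameter of the first-coordinate projection is at most the diameter. -/
lemma proj_diam_le {α β : Type*} [PseudoEMetricSpace α] [PseudoEMetricSpace β]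
    (U : Set (α × β)) :
    EMetric.diam (Prod.fst '' U) ≤ EMetric.diam U := by
  simpa [EMetric.diam] using LipschitzWith.prod_fst.ediam_image_le U

/-- The scale-`r` infimum is bounded by the sum over any admissible cover. -/
lemma cover_bound {X : Type*} [EMetricSpace X] (m : ℝ≥0∞ → ℝ≥0∞) (B : Set X) (r : ℝ≥0∞)
    (s : ℕ → Set X) (h1 : B ⊆ iUnion s) (h2 : ∀ i, EMetric.diam (s i) ≤ r) :
    (⨅ (t : ℕ → Set X) (_ : B ⊆ iUnion t) (_ : ∀ i, EMetric.diam (t i) ≤ r),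
      ∑' i, ⨆ _ : (t i).Nonempty, m (EMetric.diam (t i)))
      ≤ ∑' i, ⨆ _ : (s i).Nonempty, m (EMetric.diam (s i)) :=
  iInf_le_of_le s (iInf_le_of_le h1 (iInf_le_of_le h2 le_rfl))

/-- Slicing Lemma: if the set of slices x₁ with infinite H^g-measure fiber has positive
H^k-measure, then H^f(A) = ∞, where f(r) = r^k g(r). -/
theorem stmt11 (k l : ℕ) (hk : 0 < k) (hl : 0 < l)
    (g : ℝ → ℝ) (hg_cont : Continuous g) (hg_mono : Monotone g) (hg0 : g 0 = 0)
    (A : Set ((Fin k → ℝ) × (Fin l → ℝ))) (hA : MeasurableSet A)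
    (hAsub : A ⊆ (Set.univ.pi fun _ : Fin k => Set.Ico (0:ℝ) 1) ×ˢ
      (Set.univ.pi fun _ : Fin l => Set.Ico (0:ℝ) 1))
    (hpos : 0 < μH[(k:ℝ)]
      {x₁ : Fin k → ℝ | hMeas g {x₂ : Fin l → ℝ | (x₁, x₂) ∈ A} = ∞}) :
    hMeas (fun r => r ^ k * g r) A = ∞ := by
  classical
  by_contra hfin
  set C := hMeas (fun r => r ^ k * g r) A with hCdef
  have hClt : C < ∞ := lt_top_iff_ne_top.2 hfin
  have hg_nonneg : ∀ r : ℝ, 0 ≤ r → 0 ≤ g r := fun r hr => hg0 ▸ hg_mono hr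
  -- formula for the f-measure
  have happ : C = ⨆ (r : ℝ≥0∞) (_ : 0 < r),
      ⨅ (t : ℕ → Set ((Fin k → ℝ) × (Fin l → ℝ))) (_ : A ⊆ iUnion t)
        (_ : ∀ m, EMetric.diam (t m) ≤ r),
        ∑' m, ⨆ _ : (t m).Nonempty,
          ENNReal.ofReal ((EMetric.diam (t m)).toReal ^ k * g (EMetric.diam (t m)).toReal) :=
    Measure.mkMetric_apply _ _
  -- choose good covers at scale (n+1)⁻¹
  have hcover : ∀ n : ℕ, ∃ t : ℕ → Set ((Fin k → ℝ) × (Fin l → ℝ)),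
      (A ⊆ ⋃ m, t m) ∧ (∀ m, EMetric.diam (t m) ≤ ((n : ℝ≥0∞) + 1)⁻¹) ∧
      (∑' m, ⨆ _ : (t m).Nonempty,
        ENNReal.ofReal ((EMetric.diam (t m)).toReal ^ k
          * g (EMetric.diam (t m)).toReal)) < C + 1 := by
    intro n
    have hrpos : (0 : ℝ≥0∞) < ((n : ℝ≥0∞) + 1)⁻¹ := by
      rw [ENNReal.inv_pos]
      exact (ENNReal.add_lt_top.2 ⟨ENNReal.natCast_lt_top n, ENNReal.one_lt_top⟩).ne
    have hlt : (⨅ (t : ℕ → Set ((Fin k → ℝ) × (Fin l → ℝ))) (_ : A ⊆ iUnion t)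
        (_ : ∀ m, EMetric.diam (t m) ≤ ((n : ℝ≥0∞) + 1)⁻¹),
        ∑' m, ⨆ _ : (t m).Nonempty,
          ENNReal.ofReal ((EMetric.diam (t m)).toReal ^ k
            * g (EMetric.diam (t m)).toReal)) < C + 1 := by
      refine lt_of_le_of_lt ?_ (ENNReal.lt_add_right hfin one_ne_zero)
      rw [happ]
      exact le_iSup_of_le (((n : ℝ≥0∞) + 1)⁻¹) (le_iSup_of_le hrpos le_rfl)
    simpa only [iInf_lt_iff, exists_prop] using hlt
  choose t htsub htdiam htsum using hcover
  have htne : ∀ n m, EMetric.diam (t n m) ≠ ∞ := fun n m =>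
    ((htdiam n m).trans_lt (lt_of_le_of_lt (ENNReal.inv_le_one.2 (by
      exact_mod_cast le_add_self)) ENNReal.one_lt_top)).ne
  -- the comparison functions
  set F : ℕ → (Fin k → ℝ) → ℝ≥0∞ := fun n x₁ =>
    ∑' m, (closure (Prod.fst '' t n m)).indicator
      (fun _ => ENNReal.ofReal (g (EMetric.diam (t n m)).toReal)) x₁ with hFdef
  have hFmeas : ∀ n, Measurable (F n) := fun n =>
    Measurable.ennreal_tsum fun m =>
      measurable_const.indicator isClosed_closure.measurableSet
  -- integral bound
  have hFint : ∀ n, ∫⁻ x₁, F n x₁ ≤ C + 1 := by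
    intro n
    have h1 : ∫⁻ x₁, F n x₁ = ∑' m,
        ENNReal.ofReal (g (EMetric.diam (t n m)).toReal)
          * volume (closure (Prod.fst '' t n m)) := by
      rw [hFdef]
      rw [lintegral_tsum fun m =>
        (measurable_const.indicator isClosed_closure.measurableSet).aemeasurable]
      refine tsum_congr fun m => ?_
      rw [lintegral_indicator isClosed_closure.measurableSet, setLIntegral_const]
    rw [h1]
    refine le_trans ?_ (htsum n).le
    refine ENNReal.tsum_le_tsum fun m => ?_
    rcases eq_empty_or_nonempty (t n m) with he | hne
    · simp [he]
    · rw [iSup_pos hne]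
      have hd0 : 0 ≤ (EMetric.diam (t n m)).toReal := ENNReal.toReal_nonneg
      have hvol : volume (closure (Prod.fst '' t n m))
          ≤ ENNReal.ofReal ((EMetric.diam (t n m)).toReal ^ k) := by
        calc volume (closure (Prod.fst '' t n m))
            ≤ EMetric.diam (closure (Prod.fst '' t n m)) ^ Fintype.card (Fin k) := by
              exact Real.volume_pi_le_diam_pow _
          _ = EMetric.diam (Prod.fst '' t n m) ^ k := by
              rw [EMetric.diam, EMetric.diam_closure, Fintype.card_fin]
          _ ≤ EMetric.diam (t n m) ^ k := pow_le_pow_left' (proj_diam_le _) k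
          _ = ENNReal.ofReal ((EMetric.diam (t n m)).toReal ^ k) := by
              rw [ENNReal.ofReal_pow hd0, ENNReal.ofReal_toReal (htne n m)]
      calc ENNReal.ofReal (g (EMetric.diam (t n m)).toReal)
            * volume (closure (Prod.fst '' t n m))
          ≤ ENNReal.ofReal (g (EMetric.diam (t n m)).toReal)
            * ENNReal.ofReal ((EMetric.diam (t n m)).toReal ^ k) :=
            mul_le_mul_right hvol _
        _ = ENNReal.ofReal ((EMetric.diam (t n m)).toReal ^ k
            * g (EMetric.diam (t n m)).toReal) := by
            rw [← ENNReal.ofReal_mul (hg_nonneg _ hd0), mul_comm]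
  -- pointwise liminf is infinite on the bad set
  set S := {x₁ : Fin k → ℝ | hMeas g {x₂ : Fin l → ℝ | (x₁, x₂) ∈ A} = ∞} with hSdef
  have hliminf : ∀ x₁ ∈ S, Filter.atTop.liminf (fun n => F n x₁) = ∞ := by
    intro x₁ hx₁
    have hx₁' : (Measure.mkMetric (fun d : ℝ≥0∞ => ENNReal.ofReal (g d.toReal)) :
        Measure (Fin l → ℝ)) {x₂ : Fin l → ℝ | (x₁, x₂) ∈ A} = ∞ := hx₁
    rw [Measure.mkMetric_apply] at hx₁'
    rw [eq_top_iff, ← ENNReal.iSup_natCast]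
    refine iSup_le fun N => ?_
    have hNlt := ENNReal.natCast_lt_top N
    rw [← hx₁'] at hNlt
    rw [lt_iSup_iff] at hNlt
    obtain ⟨r, hNlt⟩ := hNlt
    rw [lt_iSup_iff] at hNlt
    obtain ⟨hr, hNlt⟩ := hNlt
    obtain ⟨n₀, hn₀⟩ := ENNReal.exists_inv_nat_lt hr.ne'
    refine Filter.le_liminf_of_le (by isBoundedDefault) ?_
    rw [Filter.eventually_atTop]
    refine ⟨n₀, fun n hn => ?_⟩
    have hscale : ((n : ℝ≥0∞) + 1)⁻¹ ≤ r := by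
      refine le_trans ?_ hn₀.le
      rw [ENNReal.inv_le_inv]
      exact_mod_cast hn.trans (Nat.le_succ n)
    have hcov : {x₂ : Fin l → ℝ | (x₁, x₂) ∈ A} ⊆ ⋃ m, {x₂ : Fin l → ℝ | (x₁, x₂) ∈ t n m} := by
      intro x₂ hx₂
      obtain ⟨m, hm⟩ := mem_iUnion.1 (htsub n hx₂)
      exact mem_iUnion.2 ⟨m, hm⟩
    have hd : ∀ m, EMetric.diam {x₂ : Fin l → ℝ | (x₁, x₂) ∈ t n m} ≤ r := fun m =>
      (fiber_diam_le x₁ _).trans ((htdiam n m).trans hscale)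
    have hbound := cover_bound (fun d => ENNReal.ofReal (g d.toReal))
      {x₂ : Fin l → ℝ | (x₁, x₂) ∈ A} r _ hcov hd
    refine le_trans (hNlt.le.trans hbound) ?_
    refine ENNReal.tsum_le_tsum fun m => ?_
    rcases eq_empty_or_nonempty {x₂ : Fin l → ℝ | (x₁, x₂) ∈ t n m} with he | hne
    · simp [he]
    · rw [iSup_pos hne]
      obtain ⟨x₂, hx₂⟩ := hne
      have hx₁mem : x₁ ∈ closure (Prod.fst '' t n m) :=
        subset_closure ⟨(x₁, x₂), hx₂, rfl⟩
      rw [indicator_of_mem hx₁mem]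
      refine ENNReal.ofReal_le_ofReal (hg_mono ?_)
      exact ENNReal.toReal_mono (htne n m) ((fiber_diam_le x₁ _))
  -- volume of the bad set is positive
  have hvolS : 0 < volume S := by
    have hhe : (μH[(Fintype.card (Fin k) : ℝ)] : Measure (Fin k → ℝ)) = volume :=
      hausdorffMeasure_pi_real
    rw [Fintype.card_fin] at hhe
    rwa [hhe] at hpos
  -- Fatou + Markov contradiction
  set G : (Fin k → ℝ) → ℝ≥0∞ := fun x₁ => Filter.atTop.liminf fun n => F n x₁ with hGdef
  have hGmeas : Measurable G := Measurable.liminf hFmeas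
  have hGle : ∫⁻ x₁, G x₁ ≤ C + 1 := by
    refine le_trans (lintegral_liminf_le hFmeas) ?_
    exact Filter.liminf_le_of_frequently_le'
      (Filter.Frequently.of_forall fun n => hFint n)
  have hmarkov : ∀ N : ℕ, (N : ℝ≥0∞) * volume S ≤ C + 1 := by
    intro N
    refine le_trans (le_trans ?_ (mul_meas_ge_le_lintegral₀ hGmeas.aemeasurable N)) hGle
    refine mul_le_mul_right (measure_mono fun x₁ hx₁ => ?_) _
    show (N : ℝ≥0∞) ≤ G x₁
    rw [hGdef]
    simp only
    rw [hliminf x₁ hx₁]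
    exact le_top
  have htop : (⊤ : ℝ≥0∞) ≤ C + 1 := by
    have : (⨆ N : ℕ, (N : ℝ≥0∞) * volume S) ≤ C + 1 := iSup_le hmarkov
    rwa [← ENNReal.iSup_mul, ENNReal.iSup_natCast, ENNReal.top_mul hvolS.ne'] at this
  exact absurd (htop.trans_lt (ENNReal.add_lt_top.2 ⟨hClt, ENNReal.one_lt_top⟩)).false id
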